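/- Let V be a positive random variable with Laplace transform ψ, and let E_{11},...,E_{1p}, E_{21},...,E_{2q} be iid standard exponentials independent of V. Then for a, b > 0, P(E_{11}+...+E_{1p} > V·a, E_{21}+...+E_{2q} > V·b) = Σ_{m=0}^{(p−1)(q−1)} ( Σ_{n=0}^{m} a^n/n! · b^{m−n}/(m−n)! ) (−1)^m ψ^{(m)}(a+b). -/

import Mathlib

open MeasureTheory ProbabilityTheory Real Set
open scoped ENNReal

namespace Stmt9Aux

noncomputable def ξ : Measure ℝ :=
  (volume.restrict (Set.Ioi 0)).withDensity fun t => ENNReal.ofReal (Real.exp (-t))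

lemma lint_exp (x : ℝ) : ∫⁻ t in Ioi x, ENNReal.ofReal (Real.exp (-t)) = ENNReal.ofReal (Real.exp (-x)) := by
  rw [← ofReal_integral_eq_lintegral_ofReal]
  · rw [integral_exp_neg_Ioi]
  · have := exp_neg_integrableOn_Ioi x (one_pos)
    simpa [IntegrableOn] using this
  · exact ae_of_all _ fun t => (exp_pos _).le

lemma ξ_apply {s : Set ℝ} (hs : MeasurableSet s) :
    ξ s = ∫⁻ t in s ∩ Ioi 0, ENNReal.ofReal (Real.exp (-t)) := by
  rw [ξ, withDensity_apply _ hs, Measure.restrict_restrict hs]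

lemma ξ_Ioi {x : ℝ} (hx : 0 ≤ x) : ξ (Ioi x) = ENNReal.ofReal (Real.exp (-x)) := by
  rw [ξ_apply measurableSet_Ioi, Ioi_inter_Ioi, sup_of_le_left hx, lint_exp]

instance : IsProbabilityMeasure ξ := by
  constructor
  rw [ξ_apply MeasurableSet.univ, univ_inter]
  rw [lint_exp 0]
  simp

lemma ξ_pos : ∀ᵐ t ∂ξ, 0 < t := by
  rw [ae_iff]
  have : {t : ℝ | ¬ 0 < t} = Iic 0 := by ext t; simp
  rw [this, ξ_apply measurableSet_Iic]
  have : Iic (0:ℝ) ∩ Ioi 0 = ∅ := by ext t; simp only [mem_inter_iff, mem_Iic, mem_Ioi, mem_empty_iff_false, iff_false, not_and, not_lt]; exact fun h => h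
  simp [this]

end Stmt9Aux

namespace Stmt9Aux

noncomputable def T (n : ℕ) (x : ℝ) : ℝ :=
  if 0 ≤ x then Real.exp (-x) * ∑ k ∈ Finset.range n, x ^ k / k.factorial else 1

lemma T_nonneg (n : ℕ) (x : ℝ) : 0 ≤ T n x := by
  rw [T]; split_ifs with h
  · apply mul_nonneg (exp_pos _).le
    apply Finset.sum_nonneg
    intro k _
    positivity
  · norm_num

lemma T_le_one (n : ℕ) (x : ℝ) : T n x ≤ 1 := by
  rw [T]; split_ifs with h
  · calc Real.exp (-x) * ∑ k ∈ Finset.range n, x ^ k / k.factorial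
        ≤ Real.exp (-x) * Real.exp x := by
          apply mul_le_mul_of_nonneg_left (Real.sum_le_exp_of_nonneg h n) (exp_pos _).le
      _ = 1 := by rw [← Real.exp_add]; simp
  · exact le_refl 1

lemma measurable_T (n : ℕ) : Measurable (T n) := by
  unfold T
  apply Measurable.ite measurableSet_Ici
  · apply Measurable.mul (by fun_prop)
    exact Finset.measurable_sum _ (fun k _ => by fun_prop)
  · exact measurable_const

end Stmt9Aux

namespace Stmt9Aux

lemma measurable_sum_fin {n : ℕ} : Measurable (fun y : Fin n → ℝ => ∑ i, y i) :=
  Finset.measurable_sum _ (fun i _ => measurable_pi_apply i)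

lemma measurable_ennreal_ofReal_T (n : ℕ) :
    Measurable (fun x => ENNReal.ofReal (T n x)) :=
  ENNReal.measurable_ofReal.comp (measurable_T n)

lemma erlang : ∀ (n : ℕ) (x : ℝ),
    (Measure.pi fun _ : Fin n => ξ) {y | x < ∑ i, y i} = ENNReal.ofReal (T n x) := by
  intro n
  induction n with
  | zero =>
      intro x
      by_cases hx : 0 ≤ x
      · have h1 : {y : Fin 0 → ℝ | x < ∑ i, y i} = ∅ := by
          ext y; simp only [Finset.univ_eq_empty, Finset.sum_empty, mem_setOf_eq,
            mem_empty_iff_false, iff_false, not_lt]; exact hx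
        rw [h1, T, if_pos hx]
        simp
      · have h1 : {y : Fin 0 → ℝ | x < ∑ i, y i} = univ := by
          ext y; simp only [Finset.univ_eq_empty, Finset.sum_empty, mem_setOf_eq, mem_univ,
            iff_true]; linarith
        rw [h1, T, if_neg hx, measure_univ, ENNReal.ofReal_one]
  | succ n ih =>
      intro x
      -- transfer via piFinSuccAbove
      set e := MeasurableEquiv.piFinSuccAbove (fun _ : Fin (n+1) => ℝ) 0 with he
      have mp := measurePreserving_piFinSuccAbove (fun _ : Fin (n+1) => ξ) 0
      have hB : MeasurableSet {tz : ℝ × (Fin n → ℝ) | x - tz.1 < ∑ i, tz.2 i} := by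
        have : Measurable (fun tz : ℝ × (Fin n → ℝ) => (∑ i, tz.2 i) - (x - tz.1)) := by
          apply Measurable.sub
          · exact measurable_sum_fin.comp measurable_snd
          · exact (measurable_const.sub measurable_fst)
        have := this measurableSet_Ioi (t := Ioi 0)
        convert this using 1
        ext tz; simp [sub_pos]
      have hset : {y : Fin (n+1) → ℝ | x < ∑ i, y i}
          = e ⁻¹' {tz : ℝ × (Fin n → ℝ) | x - tz.1 < ∑ i, tz.2 i} := by
        ext y
        have hsum : ∑ i, y i = y 0 + ∑ j, y ((0 : Fin (n+1)).succAbove j) :=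
          Fin.sum_univ_succAbove y 0
        have hey : e y = (y 0, fun j => y (Fin.succAbove 0 j)) := rfl
        simp only [mem_setOf_eq, mem_preimage, hey]
        constructor
        · intro h; rw [hsum] at h; linarith
        · intro h; rw [hsum]; linarith
      rw [hset, mp.measure_preimage hB.nullMeasurableSet]
      rw [Measure.prod_apply hB]
      have hpre : ∀ t : ℝ, (Prod.mk t ⁻¹' {tz : ℝ × (Fin n → ℝ) | x - tz.1 < ∑ i, tz.2 i})
          = {z : Fin n → ℝ | x - t < ∑ i, z i} := fun t => rfl
      simp only [hpre, ih]
      -- now compute ∫⁻ t, ofReal (T n (x - t)) ∂ξ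
      have hg : Measurable fun t : ℝ => ENNReal.ofReal (T n (x - t)) :=
        (measurable_ennreal_ofReal_T n).comp (measurable_const.sub measurable_id)
      rw [ξ, lintegral_withDensity_eq_lintegral_mul _ (by fun_prop) hg]
      simp only [Pi.mul_apply]
      by_cases hx : 0 ≤ x
      · have hsplit : Ioi (0:ℝ) = Ioc 0 x ∪ Ioi x := (Ioc_union_Ioi_eq_Ioi hx).symm
        rw [hsplit, lintegral_union measurableSet_Ioi (Ioc_disjoint_Ioi le_rfl)]
        have h2 : ∫⁻ a in Ioi x, ENNReal.ofReal (rexp (-a)) * ENNReal.ofReal (T n (x - a))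
            = ENNReal.ofReal (rexp (-x)) := by
          rw [setLIntegral_congr_fun_ae measurableSet_Ioi (ae_of_all _
            (fun a (ha : x < a) => by
              rw [T, if_neg (by linarith), ENNReal.ofReal_one, mul_one]))]
          exact lint_exp x
        have h1 : ∫⁻ a in Ioc 0 x, ENNReal.ofReal (rexp (-a)) * ENNReal.ofReal (T n (x - a))
            = ENNReal.ofReal (rexp (-x) * ∑ k ∈ Finset.range n,
                x ^ (k+1) / (k+1).factorial) := by
          rw [setLIntegral_congr_fun_ae measurableSet_Ioc (ae_of_all _
            (fun a (ha : a ∈ Ioc 0 x) => ?_))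
            (g := fun a => ENNReal.ofReal (rexp (-x) * ∑ k ∈ Finset.range n,
              (x - a) ^ k / k.factorial))]
          · rw [← ofReal_integral_eq_lintegral_ofReal]
            · congr 1
              rw [MeasureTheory.integral_const_mul, ← intervalIntegral.integral_of_le hx]
              congr 1
              rw [intervalIntegral.integral_finset_sum (fun k _ => ?_)]
              · refine Finset.sum_congr rfl fun k _ => ?_
                rw [intervalIntegral.integral_div]
                rw [intervalIntegral.integral_comp_sub_left (fun u => u ^ k) x]
                simp only [sub_zero, sub_self]
                rw [integral_pow]
                rw [Nat.factorial_succ]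
                push_cast
                rw [zero_pow (Nat.succ_ne_zero k), sub_zero]
                field_simp
              · apply Continuous.intervalIntegrable
                fun_prop
            · apply Integrable.const_mul
              apply Continuous.integrableOn_Ioc
              fun_prop
            · refine (ae_restrict_iff' measurableSet_Ioc).2 (ae_of_all _ fun a ha => ?_)
              apply mul_nonneg (exp_pos _).le
              refine Finset.sum_nonneg fun k _ => div_nonneg (pow_nonneg ?_ _) (by positivity)
              have := ha.2
              linarith
          · obtain ⟨ha0, hax⟩ := ha
            rw [T, if_pos (by linarith), ← ENNReal.ofReal_mul (exp_pos _).le]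
            congr 1
            rw [← mul_assoc, ← Real.exp_add]
            ring_nf
        rw [h1, h2, ← ENNReal.ofReal_add (mul_nonneg (exp_pos _).le (Finset.sum_nonneg fun k _ => div_nonneg (pow_nonneg hx _) (by positivity))) (exp_pos _).le]
        rw [T, if_pos hx, Finset.sum_range_succ']
        congr 1
        simp only [pow_zero, Nat.factorial_zero, Nat.cast_one, div_one]
        ring
      · rw [setLIntegral_congr_fun_ae measurableSet_Ioi (ae_of_all _
          (fun a (ha : (0:ℝ) < a) => by
            rw [T, if_neg (by linarith), ENNReal.ofReal_one, mul_one]))]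
        rw [lint_exp 0, T, if_neg hx]
        norm_num

end Stmt9Aux

namespace Stmt9Aux

lemma pow_mul_exp_le {m : ℕ} {s v : ℝ} (hs : 0 < s) (hv : 0 ≤ v) :
    v ^ m * Real.exp (-(s * v)) ≤ m.factorial / s ^ m := by
  have hsum : (s * v) ^ m / m.factorial ≤ Real.exp (s * v) := by
    refine le_trans ?_ (Real.sum_le_exp_of_nonneg (by positivity) (m + 1))
    refine Finset.single_le_sum (f := fun k => (s*v)^k / k.factorial) ?_ (Finset.self_mem_range_succ m)
    intro k _
    positivity
  have hfac : (0:ℝ) < m.factorial := by positivity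
  rw [div_le_iff₀ hfac] at hsum
  have h2 : v ^ m * Real.exp (-(s * v)) * s ^ m ≤ m.factorial := by
    have : (s * v) ^ m = s ^ m * v ^ m := mul_pow s v m
    calc v ^ m * Real.exp (-(s * v)) * s ^ m
        = (s * v) ^ m * Real.exp (-(s * v)) := by rw [this]; ring
      _ ≤ (Real.exp (s*v) * m.factorial) * Real.exp (-(s * v)) := by
          apply mul_le_mul_of_nonneg_right hsum (exp_pos _).le
      _ = m.factorial * (Real.exp (s*v) * Real.exp (-(s*v))) := by ring
      _ = m.factorial := by rw [← Real.exp_add]; simp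
  rw [le_div_iff₀ (by positivity)]
  exact h2

variable {ρ : Measure ℝ} [IsProbabilityMeasure ρ]

lemma integrable_pow_exp (hρ : ∀ᵐ v ∂ρ, 0 < v) (m : ℕ) {s : ℝ} (hs : 0 < s) :
    Integrable (fun v => v ^ m * Real.exp (-(s * v))) ρ := by
  refine Integrable.mono' (integrable_const (m.factorial / s ^ m)) ?_ ?_
  · exact Continuous.aestronglyMeasurable (by fun_prop)
  · filter_upwards [hρ] with v hv
    rw [Real.norm_eq_abs, abs_of_nonneg (by positivity)]
    exact pow_mul_exp_le hs hv.le

lemma hasDerivAt_g (hρ : ∀ᵐ v ∂ρ, 0 < v) (m : ℕ) {s₀ : ℝ} (hs : 0 < s₀) :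
    HasDerivAt (fun s => ∫ v, v ^ m * Real.exp (-(s * v)) ∂ρ)
      (-(∫ v, v ^ (m+1) * Real.exp (-(s₀ * v)) ∂ρ)) s₀ := by
  have key := hasDerivAt_integral_of_dominated_loc_of_deriv_le (μ := ρ)
    (F := fun s v => v ^ m * Real.exp (-(s * v)))
    (F' := fun s v => -(v ^ (m+1) * Real.exp (-(s * v))))
    (bound := fun _ => (m+1).factorial / (s₀/2) ^ (m+1))
    (x₀ := s₀) (s := Metric.ball s₀ (s₀/2)) (Metric.ball_mem_nhds _ (by positivity))
    (Filter.Eventually.of_forall fun s => Continuous.aestronglyMeasurable (by fun_prop))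
    (integrable_pow_exp hρ m hs)
    (Continuous.aestronglyMeasurable (by fun_prop))
    ?_ (integrable_const _) ?_
  · obtain ⟨_, h⟩ := key
    rw [integral_neg] at h
    exact h
  · filter_upwards [hρ] with v hv
    intro s hs'
    rw [Metric.mem_ball, Real.dist_eq, abs_lt] at hs'
    have hs2 : s₀/2 < s := by linarith [hs'.1]
    rw [norm_neg, Real.norm_eq_abs, abs_of_nonneg (by positivity)]
    calc v ^ (m+1) * Real.exp (-(s * v))
        ≤ v ^ (m+1) * Real.exp (-((s₀/2) * v)) := by
          apply mul_le_mul_of_nonneg_left _ (by positivity)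
          apply Real.exp_le_exp.2
          simp only [neg_le_neg_iff]
          exact mul_le_mul_of_nonneg_right hs2.le hv.le
      _ ≤ (m+1).factorial / (s₀/2) ^ (m+1) := pow_mul_exp_le (by positivity) hv.le
  · filter_upwards [hρ] with v hv
    intro s _
    have h1 : HasDerivAt (fun s : ℝ => Real.exp (-(s * v))) (-v * Real.exp (-(s * v))) s := by
      have := ((hasDerivAt_id s).const_mul (-v)).exp
      simpa [mul_comm, neg_mul] using this
    have := h1.const_mul (v ^ m)
    exact this.congr_deriv (by ring)

lemma iteratedDeriv_g (hρ : ∀ᵐ v ∂ρ, 0 < v) (ψ : ℝ → ℝ)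
    (hψ : ∀ s : ℝ, 0 < s → ψ s = ∫ v, Real.exp (-(s * v)) ∂ρ) (m : ℕ) :
    ∀ s : ℝ, 0 < s → iteratedDeriv m ψ s
      = (-1 : ℝ) ^ m * ∫ v, v ^ m * Real.exp (-(s * v)) ∂ρ := by
  induction m with
  | zero =>
      intro s hs
      simp only [iteratedDeriv_zero, pow_zero, one_mul]
      rw [hψ s hs]
  | succ m ih =>
      intro s hs
      rw [iteratedDeriv_succ]
      have hev : iteratedDeriv m ψ =ᶠ[nhds s]
          (fun u => (-1 : ℝ) ^ m * ∫ v, v ^ m * Real.exp (-(u * v)) ∂ρ) := by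
        filter_upwards [IsOpen.mem_nhds isOpen_Ioi hs] with u hu
        exact ih u hu
      rw [hev.deriv_eq]
      have := (hasDerivAt_g hρ m hs).const_mul ((-1:ℝ)^m)
      rw [this.deriv]
      rw [pow_succ]
      ring

end Stmt9Aux

namespace Stmt9Aux

lemma reindex (p q : ℕ) (hp : 0 < p) (hq : 0 < q) (f : ℕ → ℕ → ℝ) :
    ∑ k ∈ Finset.range p, ∑ l ∈ Finset.range q, f k l
    = ∑ m ∈ Finset.range (p + q - 1), ∑ n ∈ Finset.range (m + 1),
        (if n ≤ p - 1 ∧ m - n ≤ q - 1 then f n (m - n) else 0) := by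
  have hR : ∀ m, (∑ n ∈ Finset.range (m + 1),
      (if n ≤ p - 1 ∧ m - n ≤ q - 1 then f n (m - n) else 0))
      = ∑ n ∈ (Finset.range (m + 1)).filter (fun n => n ≤ p - 1 ∧ m - n ≤ q - 1),
          f n (m - n) := by
    intro m
    rw [Finset.sum_filter]
  simp only [hR]
  rw [← Finset.sum_product' (f := fun k l => f k l), Finset.sum_sigma']
  refine Finset.sum_bij' (fun kl _ => ⟨kl.1 + kl.2, kl.1⟩)
    (fun mn _ => (mn.2, mn.1 - mn.2)) ?_ ?_ ?_ ?_ ?_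
  · rintro ⟨k, l⟩ h
    simp only [Finset.mem_product, Finset.mem_range] at h
    simp only [Finset.mem_sigma, Finset.mem_range, Finset.mem_filter]
    omega
  · rintro ⟨m, n⟩ h
    simp only [Finset.mem_sigma, Finset.mem_range, Finset.mem_filter] at h
    simp only [Finset.mem_product, Finset.mem_range]
    omega
  · rintro ⟨k, l⟩ h
    simp only [Finset.mem_product, Finset.mem_range] at h
    simp only
    congr 1
    omega
  · rintro ⟨m, n⟩ h
    simp only [Finset.mem_sigma, Finset.mem_range, Finset.mem_filter] at h
    simp only [Sigma.mk.inj_iff]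
    constructor
    · omega
    · simp
  · rintro ⟨k, l⟩ h
    simp only
    congr 2
    omega

end Stmt9Aux

namespace Stmt9Aux

lemma law_eq_ξ {Ω : Type*} [MeasurableSpace Ω] (μ : Measure Ω) [IsProbabilityMeasure μ]
    (X : Ω → ℝ) (hXm : Measurable X)
    (hX : ∀ x : ℝ, 0 ≤ x → μ {ω | X ω > x} = ENNReal.ofReal (Real.exp (-x))) :
    μ.map X = ξ := by
  have hIoi : ∀ x : ℝ, μ.map X (Ioi x) = ξ (Ioi x) := by
    intro x
    rw [Measure.map_apply hXm measurableSet_Ioi]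
    by_cases hx : 0 ≤ x
    · rw [ξ_Ioi hx]; exact hX x hx
    · have hx' : x < 0 := lt_of_not_ge hx
      have h1 : μ (X ⁻¹' Ioi x) = 1 := by
        have hsub : {ω | X ω > 0} ⊆ X ⁻¹' Ioi x := fun ω h => lt_trans hx' h
        refine le_antisymm prob_le_one ?_
        calc (1:ℝ≥0∞) = μ {ω | X ω > 0} := by rw [hX 0 le_rfl]; simp
          _ ≤ μ (X ⁻¹' Ioi x) := measure_mono hsub
      rw [h1, ξ_apply measurableSet_Ioi]
      have h2 : Ioi x ∩ Ioi 0 = Ioi 0 := by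
        rw [Ioi_inter_Ioi, sup_of_le_right hx'.le]
      rw [h2, lint_exp 0]
      simp
  have : IsProbabilityMeasure (μ.map X) := Measure.isProbabilityMeasure_map hXm.aemeasurable
  refine Measure.ext_of_Iic (μ.map X) ξ fun x => ?_
  have hc : Iic x = (Ioi x)ᶜ := by simp
  rw [hc, measure_compl measurableSet_Ioi (measure_ne_top _ _),
    measure_compl measurableSet_Ioi (measure_ne_top _ _), measure_univ, measure_univ, hIoi x]

end Stmt9Aux

open Stmt9Aux in
theorem stmt9 {Ω : Type*} [MeasurableSpace Ω] (μ : Measure Ω) [IsProbabilityMeasure μ]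
    (p q : ℕ) (hp : 0 < p) (hq : 0 < q)
    (V : Ω → ℝ) (hVm : Measurable V) (hV : ∀ᵐ ω ∂μ, 0 < V ω)
    (E1 : Fin p → Ω → ℝ) (E2 : Fin q → Ω → ℝ)
    (hE1m : ∀ j, Measurable (E1 j)) (hE2m : ∀ k, Measurable (E2 k))
    (ψ : ℝ → ℝ)
    -- ψ is the Laplace transform of the positive random variable V
    (hψ : ∀ s : ℝ, 0 ≤ s → ψ s = ∫ ω, Real.exp (-(s * V ω)) ∂μ)
    -- the E's are iid standard exponentials, jointly independent of V
    (hE1d : ∀ j, ∀ x : ℝ, 0 ≤ x → μ {ω | E1 j ω > x} = ENNReal.ofReal (Real.exp (-x)))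
    (hE2d : ∀ k, ∀ x : ℝ, 0 ≤ x → μ {ω | E2 k ω > x} = ENNReal.ofReal (Real.exp (-x)))
    (hindep : iIndepFun
      (fun i : Option (Fin p ⊕ Fin q) => i.elim V (Sum.elim E1 E2)) μ)
    (a b : ℝ) (ha : 0 < a) (hb : 0 < b) :
    (μ {ω | (∑ j, E1 j ω) > V ω * a ∧ (∑ k, E2 k ω) > V ω * b}).toReal =
    ∑ m ∈ Finset.range (p + q - 1),
      (∑ n ∈ Finset.range (m + 1),
        if n ≤ p - 1 ∧ m - n ≤ q - 1 then
          a ^ n / n.factorial * (b ^ (m - n) / (m - n).factorial) else 0) *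
      ((-1 : ℝ) ^ m * iteratedDeriv m ψ (a + b)) := by
  classical
  set f : Option (Fin p ⊕ Fin q) → Ω → ℝ := fun i => i.elim V (Sum.elim E1 E2) with hf
  have hfm : ∀ i, Measurable (f i) := by
    rintro (_ | (j | k))
    · exact hVm
    · exact hE1m j
    · exact hE2m k
  set W : Ω → (Fin p ⊕ Fin q) → ℝ := fun ω i => Sum.elim E1 E2 i ω with hWdef
  have hWm : Measurable W := by
    apply measurable_pi_lambda
    rintro (j | k)
    · exact hE1m j
    · exact hE2m k
  have hlaw : ∀ i : Fin p ⊕ Fin q, μ.map (Sum.elim E1 E2 i) = ξ := by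
    rintro (j | k)
    · exact law_eq_ξ μ (E1 j) (hE1m j) (hE1d j)
    · exact law_eq_ξ μ (E2 k) (hE2m k) (hE2d k)
  have hWlaw : μ.map W = Measure.pi (fun _ : Fin p ⊕ Fin q => ξ) := by
    refine (Measure.pi_eq fun s hs => ?_).symm
    rw [Measure.map_apply hWm (MeasurableSet.univ_pi hs)]
    set s' : Option (Fin p ⊕ Fin q) → Set ℝ := fun o => o.elim univ s with hs'
    have hs'm : ∀ o, MeasurableSet (s' o) := by
      rintro (_ | i)
      · exact MeasurableSet.univ
      · exact hs i
    have hpre : W ⁻¹' (univ.pi s) = ⋂ o, f o ⁻¹' (s' o) := by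
      ext ω
      simp only [mem_preimage, mem_pi, mem_univ, forall_true_left, mem_iInter]
      constructor
      · rintro h (_ | i)
        · exact mem_univ _
        · exact h i
      · intro h i
        exact h (some i)
    rw [hpre, hindep.meas_iInter (fun o => ⟨s' o, hs'm o, rfl⟩)]
    rw [Fintype.prod_option]
    have h0 : μ (f none ⁻¹' s' none) = 1 := by
      simp only [hs', hf]
      rw [show (Option.elim none univ s : Set ℝ) = univ from rfl, preimage_univ, measure_univ]
    rw [h0, one_mul]
    refine Finset.prod_congr rfl fun i _ => ?_
    rw [← hlaw i, Measure.map_apply (by rintro s hs; exact (hfm (some i)) hs) (hs i)]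
    rfl
  have hIndep : IndepFun V W μ := by
    have h := hindep.indepFun_finset {Option.none} ({Option.none}ᶜ) disjoint_compl_right hfm
    have hφ1 : Measurable (fun w : (({Option.none} : Finset (Option (Fin p ⊕ Fin q))) → ℝ) =>
        w ⟨Option.none, Finset.mem_singleton_self _⟩) := measurable_pi_apply _
    have hφ2 : Measurable (fun w : ((({Option.none}ᶜ : Finset (Option (Fin p ⊕ Fin q)))) → ℝ) =>
        (fun i : Fin p ⊕ Fin q => w ⟨some i, by simp⟩)) :=
      measurable_pi_lambda _ (fun i => measurable_pi_apply _)
    have h2 := h.comp hφ1 hφ2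
    exact h2
  set ρ : Measure ℝ := μ.map V with hρdef
  have hρprob : IsProbabilityMeasure ρ := Measure.isProbabilityMeasure_map hVm.aemeasurable
  have hρpos : ∀ᵐ v ∂ρ, 0 < v := (ae_map_iff hVm.aemeasurable measurableSet_Ioi).2 hV
  have hmain : μ {ω | (∑ j, E1 j ω) > V ω * a ∧ (∑ k, E2 k ω) > V ω * b}
      = ∫⁻ v, ENNReal.ofReal (T p (v*a)) * ENNReal.ofReal (T q (v*b)) ∂ρ := by
    have msum1 : Measurable (fun z : (Fin p ⊕ Fin q) → ℝ => ∑ j : Fin p, z (Sum.inl j)) :=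
      Finset.measurable_sum _ (fun j _ => measurable_pi_apply _)
    have msum2 : Measurable (fun z : (Fin p ⊕ Fin q) → ℝ => ∑ k : Fin q, z (Sum.inr k)) :=
      Finset.measurable_sum _ (fun k _ => measurable_pi_apply _)
    set C : Set (ℝ × ((Fin p ⊕ Fin q) → ℝ)) :=
      {vz | vz.1 * a < ∑ j : Fin p, vz.2 (Sum.inl j) ∧ vz.1 * b < ∑ k : Fin q, vz.2 (Sum.inr k)}
      with hC
    have hCm : MeasurableSet C := by
      apply MeasurableSet.inter
      · exact measurableSet_lt (measurable_fst.mul_const a) (msum1.comp measurable_snd)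
      · exact measurableSet_lt (measurable_fst.mul_const b) (msum2.comp measurable_snd)
    have hev : {ω | (∑ j, E1 j ω) > V ω * a ∧ (∑ k, E2 k ω) > V ω * b}
        = (fun ω => (V ω, W ω)) ⁻¹' C := rfl
    rw [hev, ← Measure.map_apply (hVm.prodMk hWm) hCm]
    rw [(indepFun_iff_map_prod_eq_prod_map_map hVm.aemeasurable hWm.aemeasurable).1 hIndep]
    rw [hWlaw, Measure.prod_apply hCm]
    refine lintegral_congr fun v => ?_
    have hA : MeasurableSet {u : Fin p → ℝ | v * a < ∑ j, u j} :=
      measurableSet_lt measurable_const measurable_sum_fin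
    have hB : MeasurableSet {w : Fin q → ℝ | v * b < ∑ k, w k} :=
      measurableSet_lt measurable_const measurable_sum_fin
    have hpre2 : Prod.mk v ⁻¹' C
        = (MeasurableEquiv.sumPiEquivProdPi (fun _ : Fin p ⊕ Fin q => ℝ)) ⁻¹'
          ({u : Fin p → ℝ | v * a < ∑ j, u j} ×ˢ {w : Fin q → ℝ | v * b < ∑ k, w k}) := rfl
    rw [hpre2,
      (measurePreserving_sumPiEquivProdPi (fun _ : Fin p ⊕ Fin q => ξ)).measure_preimage
        (hA.prod hB).nullMeasurableSet,
      Measure.prod_prod, erlang, erlang]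
  rw [hmain]
  set M : ℕ → ℝ := fun m => ∫ v, v ^ m * Real.exp (-((a+b) * v)) ∂ρ with hM
  set G : ℝ → ℝ := fun v =>
    (Real.exp (-(v*a)) * ∑ k ∈ Finset.range p, (v*a)^k / k.factorial) *
    (Real.exp (-(v*b)) * ∑ l ∈ Finset.range q, (v*b)^l / l.factorial) with hG
  have hGT : ∀ v : ℝ, 0 < v → G v = T p (v*a) * T q (v*b) := by
    intro v hv
    rw [hG, T, if_pos (mul_nonneg hv.le ha.le), T, if_pos (mul_nonneg hv.le hb.le)]
  have hGnn : ∀ v : ℝ, 0 < v → 0 ≤ G v := by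
    intro v hv
    rw [hGT v hv]
    exact mul_nonneg (T_nonneg _ _) (T_nonneg _ _)
  have hTTG : ∀ᵐ v ∂ρ, ENNReal.ofReal (T p (v*a)) * ENNReal.ofReal (T q (v*b))
      = ENNReal.ofReal (G v) := by
    filter_upwards [hρpos] with v hv
    rw [hGT v hv, ENNReal.ofReal_mul (T_nonneg _ _)]
  rw [lintegral_congr_ae hTTG]
  have hGmeas : AEStronglyMeasurable G ρ := Continuous.aestronglyMeasurable (by fun_prop)
  have hGnonneg : ∀ᵐ v ∂ρ, 0 ≤ G v := by
    filter_upwards [hρpos] with v hv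
    exact hGnn v hv
  have hGint : Integrable G ρ := by
    refine Integrable.mono' (integrable_const 1) hGmeas ?_
    filter_upwards [hρpos] with v hv
    rw [Real.norm_eq_abs, abs_of_nonneg (hGnn v hv), hGT v hv]
    exact mul_le_one₀ (T_le_one _ _) (T_nonneg _ _) (T_le_one _ _)
  rw [← ofReal_integral_eq_lintegral_ofReal hGint hGnonneg,
    ENNReal.toReal_ofReal (integral_nonneg_of_ae hGnonneg)]
  have hGexp : ∀ v : ℝ, G v = ∑ k ∈ Finset.range p, ∑ l ∈ Finset.range q,
      (a^k / k.factorial * (b^l / l.factorial)) * (v^(k+l) * Real.exp (-((a+b)*v))) := by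
    intro v
    have hE : Real.exp (-(v*a)) * Real.exp (-(v*b)) = Real.exp (-((a+b)*v)) := by
      rw [← Real.exp_add]; ring_nf
    calc G v = (Real.exp (-(v*a)) * Real.exp (-(v*b))) *
        ((∑ k ∈ Finset.range p, (v*a)^k / k.factorial) *
         (∑ l ∈ Finset.range q, (v*b)^l / l.factorial)) := by rw [hG]; ring
      _ = Real.exp (-((a+b)*v)) * ∑ k ∈ Finset.range p, ∑ l ∈ Finset.range q,
          ((v*a)^k / k.factorial) * ((v*b)^l / l.factorial) := by
            rw [hE, Finset.sum_mul_sum]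
      _ = _ := by
            rw [Finset.mul_sum]
            refine Finset.sum_congr rfl fun k _ => ?_
            rw [Finset.mul_sum]
            refine Finset.sum_congr rfl fun l _ => ?_
            rw [mul_pow, mul_pow, pow_add]
            ring
  have hint1 : ∀ k l : ℕ, Integrable
      (fun v => (a^k / k.factorial * (b^l / l.factorial)) *
        (v^(k+l) * Real.exp (-((a+b)*v)))) ρ :=
    fun k l => (integrable_pow_exp hρpos (k+l) (by positivity)).const_mul _
  have hstep : ∫ v, G v ∂ρ = ∑ k ∈ Finset.range p, ∑ l ∈ Finset.range q,
      (a^k / k.factorial * (b^l / l.factorial)) * M (k+l) := by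
    rw [integral_congr_ae (Filter.Eventually.of_forall hGexp)]
    rw [integral_finset_sum _ (fun k _ => integrable_finset_sum _ (fun l _ => hint1 k l))]
    refine Finset.sum_congr rfl fun k _ => ?_
    rw [integral_finset_sum _ (fun l _ => hint1 k l)]
    refine Finset.sum_congr rfl fun l _ => ?_
    rw [integral_const_mul]
  rw [hstep]
  have hψ' : ∀ s : ℝ, 0 < s → ψ s = ∫ v, Real.exp (-(s*v)) ∂ρ := by
    intro s hs
    rw [hψ s hs.le, hρdef,
      integral_map hVm.aemeasurable (Continuous.aestronglyMeasurable (by fun_prop))]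
  have hiter : ∀ m : ℕ, (-1:ℝ)^m * iteratedDeriv m ψ (a+b) = M m := by
    intro m
    rw [iteratedDeriv_g hρpos ψ hψ' m (a+b) (by positivity)]
    rw [← mul_assoc, ← mul_pow]
    norm_num
    rfl
  simp only [hiter]
  rw [reindex p q hp hq (fun k l => a^k / k.factorial * (b^l / l.factorial) * M (k+l))]
  refine Finset.sum_congr rfl fun m hm => ?_
  rw [Finset.sum_mul]
  refine Finset.sum_congr rfl fun n hn => ?_
  rw [ite_mul, zero_mul]
  rw [Finset.mem_range] at hn
  have hnm : n + (m - n) = m := Nat.add_sub_cancel' (Nat.lt_succ_iff.1 hn)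
  rw [hnm]
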